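/- arXiv:1504.04179 — 8 statements merged into one kernel-verified Lean document; each statement's English description precedes it below -/
import Mathlib

section
/- Let H be a finite-dimensional real inner product space, let A : H → H be a symmetric (self-adjoint) positive definite linear operator, let τ > 0, let σ ≥ √(3/8), and set Ã = A + (τ/2)A², B = I + τA + (τ²/2)A², G = (τ/2)(I + (4σ − 3/2)τA + (2σ² − 3/4)τ²A²). Suppose the sequences (yⁿ) in H and (φⁿ) in H satisfy, for every n ≥ 1, the three-level factorized scheme (I + στA)² (yⁿ⁺¹ − yⁿ)/τ + (I + τA + (τ²/2)A² − (I + στA)²)(yⁿ − yⁿ⁻¹)/τ + (A + (τ/2)A²) yⁿ = φⁿ. Then for every n ≥ 1 the a priori estimate ℰ_{n+1} ≤ ℰ_n + (τ/2)⟨B⁻¹φⁿ, φⁿ⟩ holds, where ℰ_n = ⟨Ã (yⁿ + yⁿ⁻¹)/2, (yⁿ + yⁿ⁻¹)/2⟩ + ⟨G (yⁿ − yⁿ⁻¹)/τ, (yⁿ − yⁿ⁻¹)/τ⟩. -/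
open RealInnerProductSpace

set_option maxHeartbeats 2000000 in
/-- A priori estimate for the three-level factorized scheme
`(I + στA)² (yⁿ⁺¹ − yⁿ)/τ + (I + τA + (τ²/2)A² − (I + στA)²)(yⁿ − yⁿ⁻¹)/τ
 + (A + (τ/2)A²) yⁿ = φⁿ`
with a symmetric positive definite `A`, `τ > 0` and `σ ≥ √(3/8)`:
`ℰ_{n+1} ≤ ℰ_n + (τ/2)⟨B⁻¹φⁿ, φⁿ⟩`.  Here `P = I + στA`, so `P ∘ₗ P = (I + στA)²`. -/
theorem stmt_0 {H : Type*} [NormedAddCommGroup H] [InnerProductSpace ℝ H]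
    [FiniteDimensional ℝ H]
    (A : H →ₗ[ℝ] H)
    (hsym : ∀ x y : H, ⟪A x, y⟫ = ⟪x, A y⟫)
    (hpos : ∀ v : H, v ≠ 0 → 0 < ⟪A v, v⟫)
    (τ σ : ℝ) (hτ : 0 < τ) (hσ : Real.sqrt (3 / 8) ≤ σ)
    (Atil B G P : H →ₗ[ℝ] H)
    (hAtil : Atil = A + (τ / 2) • (A ∘ₗ A))
    (hB : B = LinearMap.id + τ • A + (τ ^ 2 / 2) • (A ∘ₗ A))
    (hG : G = (τ / 2) • (LinearMap.id + ((4 * σ - 3 / 2) * τ) • A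
      + ((2 * σ ^ 2 - 3 / 4) * τ ^ 2) • (A ∘ₗ A)))
    (hP : P = LinearMap.id + (σ * τ) • A)
    (y φ : ℕ → H)
    (hscheme : ∀ n : ℕ, 1 ≤ n →
      (P ∘ₗ P) (τ⁻¹ • (y (n + 1) - y n))
        + (B - P ∘ₗ P) (τ⁻¹ • (y n - y (n - 1)))
        + Atil (y n) = φ n)
    (E : ℕ → ℝ)
    (hE : ∀ n : ℕ, E n =
      ⟪Atil ((1 / 2 : ℝ) • (y n + y (n - 1))), (1 / 2 : ℝ) • (y n + y (n - 1))⟫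
      + ⟪G (τ⁻¹ • (y n - y (n - 1))), τ⁻¹ • (y n - y (n - 1))⟫) :
    ∀ n : ℕ, 1 ≤ n →
      E (n + 1) ≤ E n + (τ / 2) * ⟪Ring.inverse B (φ n), φ n⟫ := by
  have hτ0 : τ ≠ 0 := ne_of_gt hτ
  have hApos : ∀ v : H, 0 ≤ ⟪A v, v⟫ := by
    intro v
    rcases eq_or_ne v 0 with h | h
    · simp [h]
    · exact (hpos v h).le
  have hsym2 : ∀ x y : H, ⟪A (A x), y⟫ = ⟪x, A (A y)⟫ := fun x y => by
    rw [hsym, hsym]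
  have hBexp : ∀ v : H, ⟪B v, v⟫ = ⟪v, v⟫ + τ * ⟪A v, v⟫ + τ ^ 2 / 2 * ⟪A v, A v⟫ := by
    intro v
    rw [hB]
    simp only [LinearMap.add_apply, LinearMap.smul_apply, LinearMap.comp_apply,
      LinearMap.id_apply, inner_add_left, real_inner_smul_left, hsym (A v) v]
  have hBpos : ∀ v : H, 0 ≤ ⟪B v, v⟫ := by
    intro v
    rw [hBexp v]
    have h1 : (0:ℝ) ≤ ⟪v, v⟫ := real_inner_self_nonneg
    have h2 : (0:ℝ) ≤ ⟪A v, A v⟫ := real_inner_self_nonneg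
    have h3 := mul_nonneg hτ.le (hApos v)
    nlinarith
  have hker : LinearMap.ker B = ⊥ := by
    rw [LinearMap.ker_eq_bot']
    intro v hv
    by_contra hv0
    have h1 : 0 < ⟪v, v⟫ := by
      rw [real_inner_self_eq_norm_sq]
      exact pow_pos (norm_pos_iff.mpr hv0) 2
    have h2 : ⟪B v, v⟫ = 0 := by rw [hv, inner_zero_left]
    have h3 := hBexp v
    have h4 : (0:ℝ) ≤ ⟪A v, A v⟫ := real_inner_self_nonneg
    nlinarith [mul_nonneg hτ.le (hApos v)]
  have hBunit : IsUnit B := (LinearMap.isUnit_iff_ker_eq_bot B).mpr hker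
  have hBinv : ∀ x : H, B (Ring.inverse B x) = x := by
    intro x
    have h := Ring.mul_inverse_cancel B hBunit
    have h2 := congrArg (fun f : H →ₗ[ℝ] H => f x) h
    simpa [Module.End.mul_apply] using h2
  have hBsym : ∀ x y : H, ⟪B x, y⟫ = ⟪x, B y⟫ := by
    intro x y
    rw [hB]
    simp only [LinearMap.add_apply, LinearMap.smul_apply, LinearMap.comp_apply,
      LinearMap.id_apply, inner_add_left, inner_add_right, real_inner_smul_left,
      real_inner_smul_right, hsym, hsym2]
  intro n hn
  set a := y (n - 1) with ha
  set b := y n with hb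
  set c := y (n + 1) with hc
  have hEn1 := hE (n + 1)
  rw [Nat.add_sub_cancel] at hEn1
  have hEn := hE n
  have hsch := hscheme n hn
  set z := Ring.inverse B (φ n) with hzdef
  have hz : B z = φ n := hBinv _
  set r : H := (1 / 2 : ℝ) • (τ⁻¹ • (c - b) + τ⁻¹ • (b - a)) with hr
  have c1 : ⟪b, a⟫ = ⟪a, b⟫ := real_inner_comm _ _
  have c2 : ⟪c, a⟫ = ⟪a, c⟫ := real_inner_comm _ _
  have c3 : ⟪c, b⟫ = ⟪b, c⟫ := real_inner_comm _ _
  have d1 : ⟪b, A a⟫ = ⟪a, A b⟫ := (real_inner_comm _ _).trans (hsym a b)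
  have d2 : ⟪c, A a⟫ = ⟪a, A c⟫ := (real_inner_comm _ _).trans (hsym a c)
  have d3 : ⟪c, A b⟫ = ⟪b, A c⟫ := (real_inner_comm _ _).trans (hsym b c)
  have e1 : ⟪b, A (A a)⟫ = ⟪a, A (A b)⟫ := (real_inner_comm _ _).trans (hsym2 a b)
  have e2 : ⟪c, A (A a)⟫ = ⟪a, A (A c)⟫ := (real_inner_comm _ _).trans (hsym2 a c)
  have e3 : ⟪c, A (A b)⟫ = ⟪b, A (A c)⟫ := (real_inner_comm _ _).trans (hsym2 b c)
  have key : E (n + 1) = E n + 2 * τ * ⟪φ n, r⟫ - 2 * τ * ⟪B r, r⟫ := by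
    rw [hEn1, hEn, ← hsch, hr, hAtil, hB, hG, hP]
    simp only [← ha, ← hb, ← hc]
    simp only [LinearMap.add_apply, LinearMap.sub_apply, LinearMap.smul_apply,
      LinearMap.comp_apply, LinearMap.id_apply, map_add, map_sub, map_smul,
      smul_add, smul_sub, smul_smul, inner_add_left, inner_add_right,
      inner_sub_left, inner_sub_right, real_inner_smul_left, real_inner_smul_right]
    simp only [hsym, hsym2]
    simp only [c1, c2, c3, d1, d2, d3, e1, e2, e3]
    field_simp
    ring
  have hq : (0:ℝ) ≤ ⟪B (z - (2:ℝ) • r), z - (2:ℝ) • r⟫ := hBpos _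
  have hcr : ⟪B r, z⟫ = ⟪B z, r⟫ := by rw [hBsym, real_inner_comm]
  have hexp : ⟪B (z - (2:ℝ) • r), z - (2:ℝ) • r⟫
      = ⟪B z, z⟫ - 4 * ⟪B z, r⟫ + 4 * ⟪B r, r⟫ := by
    simp only [map_sub, map_smul, inner_sub_left, inner_sub_right,
      real_inner_smul_left, real_inner_smul_right, hcr]
    ring
  have hq' : (0:ℝ) ≤ ⟪B z, z⟫ - 4 * ⟪B z, r⟫ + 4 * ⟪B r, r⟫ := hexp ▸ hq
  have hz1 : ⟪z, φ n⟫ = ⟪B z, z⟫ := by rw [← hz, real_inner_comm]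
  have hz2 : ⟪φ n, r⟫ = ⟪B z, r⟫ := by rw [← hz]
  rw [key, hz1, hz2]
  nlinarith [mul_nonneg hτ.le hq']
end

section
/- Let H be a finite-dimensional real inner product space, let A : H → H be a symmetric (self-adjoint) positive definite linear operator, let τ > 0 and σ ≥ √(3/8). Then the operator G = (τ/2)(I + (4σ − 3/2)τA + (2σ² − 3/4)τ²A²) is symmetric positive definite, i.e., ⟨Gv, v⟩ > 0 for every nonzero v ∈ H. -/
open RealInnerProductSpace

/-- For a symmetric positive definite operator `A` on a
finite-dimensional real inner product space, `τ > 0` and `σ ≥ √(3/8)`,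
the operator `G = (τ/2)(I + (4σ − 3/2)τA + (2σ² − 3/4)τ²A²)` is
symmetric positive definite. -/
theorem stmt_1 {H : Type*} [NormedAddCommGroup H] [InnerProductSpace ℝ H]
    [FiniteDimensional ℝ H]
    (A : H →ₗ[ℝ] H)
    (hsym : ∀ x y : H, ⟪A x, y⟫ = ⟪x, A y⟫)
    (hpos : ∀ v : H, v ≠ 0 → 0 < ⟪A v, v⟫)
    (τ σ : ℝ) (hτ : 0 < τ) (hσ : Real.sqrt (3 / 8) ≤ σ)
    (G : H →ₗ[ℝ] H)
    (hG : G = (τ / 2) • (LinearMap.id + ((4 * σ - 3 / 2) * τ) • A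
      + ((2 * σ ^ 2 - 3 / 4) * τ ^ 2) • (A ∘ₗ A))) :
    (∀ x y : H, ⟪G x, y⟫ = ⟪x, G y⟫) ∧ ∀ v : H, v ≠ 0 → 0 < ⟪G v, v⟫ := by
  have hσ0 : 0 ≤ σ := le_trans (Real.sqrt_nonneg _) hσ
  have hσ2 : (3/8 : ℝ) ≤ σ ^ 2 := by
    have h := Real.sq_sqrt (show (0:ℝ) ≤ 3/8 by norm_num)
    nlinarith [Real.sqrt_nonneg (3/8 : ℝ)]
  have hc1 : 0 ≤ (4 * σ - 3 / 2) * τ := by nlinarith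
  have hc2 : 0 ≤ (2 * σ ^ 2 - 3 / 4) * τ ^ 2 := by nlinarith
  subst hG
  constructor
  · intro x y
    simp only [LinearMap.smul_apply, LinearMap.add_apply, LinearMap.id_apply,
      LinearMap.comp_apply, inner_smul_left, inner_smul_right, inner_add_left,
      inner_add_right, conj_trivial]
    rw [hsym, hsym (A x) y, hsym x (A y)]
  · intro v hv
    simp only [LinearMap.smul_apply, LinearMap.add_apply, LinearMap.id_apply,
      LinearMap.comp_apply, inner_smul_left, inner_add_left, conj_trivial]
    have h1 : 0 < ⟪v, v⟫ := by rw [real_inner_self_eq_norm_sq]; exact pow_pos (norm_pos_iff.mpr hv) 2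
    have h2 : 0 < ⟪A v, v⟫ := hpos v hv
    have h3 : (0:ℝ) ≤ ⟪A (A v), v⟫ := by
      rw [hsym]; exact real_inner_self_nonneg
    have := mul_nonneg hc1 h2.le
    have := mul_nonneg hc2 h3
    nlinarith
end

section
/- Let H be a finite-dimensional real inner product space, let A : H → H be a symmetric (self-adjoint) positive definite linear operator, let τ > 0, let σ ≥ √(3/8), and set Ã = A + (τ/2)A², G = (τ/2)(I + (4σ − 3/2)τA + (2σ² − 3/4)τ²A²). Suppose the sequence (yⁿ) in H satisfies, for every n ≥ 1, the homogeneous three-level factorized scheme (I + στA)² (yⁿ⁺¹ − yⁿ)/τ + (I + τA + (τ²/2)A² − (I + στA)²)(yⁿ − yⁿ⁻¹)/τ + (A + (τ/2)A²) yⁿ = 0. Then the energy ℰ_n = ⟨Ã (yⁿ + yⁿ⁻¹)/2, (yⁿ + yⁿ⁻¹)/2⟩ + ⟨G (yⁿ − yⁿ⁻¹)/τ, (yⁿ − yⁿ⁻¹)/τ⟩ is nonincreasing: ℰ_{n+1} ≤ ℰ_n for all n ≥ 1, and consequently ℰ_n ≤ ℰ_1 for all n ≥ 1. -/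
open RealInnerProductSpace

/-- For the homogeneous three-level factorized scheme
`(I + στA)² (yⁿ⁺¹ − yⁿ)/τ + (I + τA + (τ²/2)A² − (I + στA)²)(yⁿ − yⁿ⁻¹)/τ
 + (A + (τ/2)A²) yⁿ = 0`
with a symmetric positive definite `A`, `τ > 0` and `σ ≥ √(3/8)`, the energy
`ℰ_n` is nonincreasing and `ℰ_n ≤ ℰ_1` for all `n ≥ 1`.
Here `P = I + στA` and `B = I + τA + (τ²/2)A²`, so `P ∘ₗ P = (I + στA)²`. -/
theorem stmt_3 {H : Type*} [NormedAddCommGroup H] [InnerProductSpace ℝ H]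
    [FiniteDimensional ℝ H]
    (A : H →ₗ[ℝ] H)
    (hsym : ∀ x y : H, ⟪A x, y⟫ = ⟪x, A y⟫)
    (hpos : ∀ v : H, v ≠ 0 → 0 < ⟪A v, v⟫)
    (τ σ : ℝ) (hτ : 0 < τ) (hσ : Real.sqrt (3 / 8) ≤ σ)
    (Atil B G P : H →ₗ[ℝ] H)
    (hAtil : Atil = A + (τ / 2) • (A ∘ₗ A))
    (hB : B = LinearMap.id + τ • A + (τ ^ 2 / 2) • (A ∘ₗ A))
    (hG : G = (τ / 2) • (LinearMap.id + ((4 * σ - 3 / 2) * τ) • A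
      + ((2 * σ ^ 2 - 3 / 4) * τ ^ 2) • (A ∘ₗ A)))
    (hP : P = LinearMap.id + (σ * τ) • A)
    (y : ℕ → H)
    (hscheme : ∀ n : ℕ, 1 ≤ n →
      (P ∘ₗ P) (τ⁻¹ • (y (n + 1) - y n))
        + (B - P ∘ₗ P) (τ⁻¹ • (y n - y (n - 1)))
        + Atil (y n) = 0)
    (E : ℕ → ℝ)
    (hE : ∀ n : ℕ, E n =
      ⟪Atil ((1 / 2 : ℝ) • (y n + y (n - 1))), (1 / 2 : ℝ) • (y n + y (n - 1))⟫
      + ⟪G (τ⁻¹ • (y n - y (n - 1))), τ⁻¹ • (y n - y (n - 1))⟫) :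
    (∀ n : ℕ, 1 ≤ n → E (n + 1) ≤ E n) ∧ (∀ n : ℕ, 1 ≤ n → E n ≤ E 1) := by
  have hτ' : (τ : ℝ) ≠ 0 := ne_of_gt hτ
  have hsym2 : ∀ p q : H, ⟪p, A q⟫ = ⟪A p, q⟫ := fun p q => (hsym p q).symm
  have hAA : ∀ p q : H, ⟪A (A p), q⟫ = ⟪A p, A q⟫ := fun p q => hsym (A p) q
  have hAA' : ∀ p q : H, ⟪p, A (A q)⟫ = ⟪A p, A q⟫ := fun p q => (hsym p (A q)).symm
  have hc1 : ∀ p q : H, ⟪A p, q⟫ = ⟪A q, p⟫ := fun p q => by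
    rw [hsym, real_inner_comm]
  have hc2 : ∀ p q : H, ⟪A p, A q⟫ = ⟪A q, A p⟫ := fun p q => real_inner_comm _ _
  -- auxiliary step lemma
  have aux : ∀ a b w : H,
      (P ∘ₗ P) a + (B - P ∘ₗ P) b + Atil w = 0 →
      ⟪Atil (w + (τ/2) • a), w + (τ/2) • a⟫ + ⟪G a, a⟫ ≤
      ⟪Atil (w - (τ/2) • b), w - (τ/2) • b⟫ + ⟪G b, b⟫ := by
    intro a b w hS
    have h0 : ⟪(P ∘ₗ P) a + (B - P ∘ₗ P) b + Atil w, a + b⟫ = (0:ℝ) := by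
      rw [hS, inner_zero_left]
    have hBnn : (0:ℝ) ≤ ⟪B (a + b), a + b⟫ := by
      have h1 : ⟪B (a+b), a+b⟫ = ⟪a+b, a+b⟫ + τ * ⟪A (a+b), a+b⟫
          + τ^2/2 * ⟪A (a+b), A (a+b)⟫ := by
        simp only [hB, LinearMap.add_apply, LinearMap.smul_apply, LinearMap.comp_apply,
          LinearMap.id_coe, id_eq, inner_add_left, real_inner_smul_left, hAA]
      have h2 : (0:ℝ) ≤ ⟪A (a+b), a+b⟫ := by
        rcases eq_or_ne (a + b) 0 with h | h
        · simp [h]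
        · exact le_of_lt (hpos _ h)
      have h3 : (0:ℝ) ≤ ⟪a+b, a+b⟫ := real_inner_self_nonneg
      have h4 : (0:ℝ) ≤ ⟪A (a+b), A (a+b)⟫ := real_inner_self_nonneg
      nlinarith [hτ]
    have key : (⟪Atil (w + (τ/2) • a), w + (τ/2) • a⟫ + ⟪G a, a⟫)
        - (⟪Atil (w - (τ/2) • b), w - (τ/2) • b⟫ + ⟪G b, b⟫)
        = τ * ⟪(P ∘ₗ P) a + (B - P ∘ₗ P) b + Atil w, a + b⟫
          - (τ/2) * ⟪B (a + b), a + b⟫ := by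
      set_option maxRecDepth 4000 in
      simp only [hAtil, hB, hG, hP, LinearMap.sub_apply, LinearMap.add_apply,
        LinearMap.smul_apply, LinearMap.comp_apply, LinearMap.id_coe, id_eq,
        map_add, map_sub, map_smul, smul_add, smul_sub, smul_smul,
        inner_add_left, inner_add_right, inner_sub_left, inner_sub_right,
        real_inner_smul_left, real_inner_smul_right, hAA]
      simp only [hc1 b a, hc1 w a, hc1 w b, hc2 b a, hc2 w a, hc2 w b,
        real_inner_comm b a, real_inner_comm w a, real_inner_comm w b]
      ring
    have hmul : (0:ℝ) ≤ (τ/2) * ⟪B (a + b), a + b⟫ :=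
      mul_nonneg (by linarith) hBnn
    rw [h0] at key
    linarith
  have step : ∀ n : ℕ, 1 ≤ n → E (n + 1) ≤ E n := by
    intro n hn
    have hsch := hscheme n hn
    have hE1 := hE (n + 1)
    have hE0 := hE n
    simp only [Nat.add_sub_cancel] at hE1
    set u := y (n + 1) with hu
    set w := y n with hw
    set z := y (n - 1) with hz
    have hr1 : (1/2 : ℝ) • (u + w) = w + (τ/2) • (τ⁻¹ • (u - w)) := by
      rw [smul_smul, show τ/2 * τ⁻¹ = (1/2 : ℝ) by rw [div_mul_eq_mul_div, mul_inv_cancel₀ hτ']]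
      module
    have hr2 : (1/2 : ℝ) • (w + z) = w - (τ/2) • (τ⁻¹ • (w - z)) := by
      rw [smul_smul, show τ/2 * τ⁻¹ = (1/2 : ℝ) by rw [div_mul_eq_mul_div, mul_inv_cancel₀ hτ']]
      module
    rw [hE1, hE0, hr1, hr2]
    exact aux (τ⁻¹ • (u - w)) (τ⁻¹ • (w - z)) w hsch
  refine ⟨step, ?_⟩
  intro n hn
  induction n, hn using Nat.le_induction with
  | base => exact le_refl _
  | succ n hn ih => exact (step n hn).trans ih
end

section
/- Let H be a finite-dimensional real inner product space, let A : H → H be a symmetric (self-adjoint) positive definite linear operator, let τ > 0 and σ > 0. Suppose y, ỹ, y⁺ ∈ H satisfy the prediction step (I + τA)(ỹ − y)/τ + A y = 0 and the correction step (I + στA)² (y⁺ − y)/τ + (I + τA + (τ²/2)A² − (I + στA)²)(ỹ − y)/τ + (A + (τ/2)A²) y = 0. Then (I + τA)(I + στA)² y⁺ = (I + 2στA + (σ² − 1/2)τ²A²) y; that is, y⁺ = s(τA) y where s is the stability function s(z) = (1 + 2σz + (σ² − 1/2)z²) / (1 + (1+2σ)z + (σ² + 2σ)z² + σ²z³). 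-/
open RealInnerProductSpace

/-- If `y, ỹ, y⁺` satisfy the prediction step
`(I + τA)(ỹ − y)/τ + A y = 0` and the correction step
`(I + στA)² (y⁺ − y)/τ + (I + τA + (τ²/2)A² − (I + στA)²)(ỹ − y)/τ + (A + (τ/2)A²) y = 0`
then `(I + τA)(I + στA)² y⁺ = (I + 2στA + (σ² − 1/2)τ²A²) y`.
Here `P = I + στA`, so `P ∘ₗ P = (I + στA)²`. -/
theorem stmt_4 {H : Type*} [NormedAddCommGroup H] [InnerProductSpace ℝ H]
    [FiniteDimensional ℝ H]
    (A : H →ₗ[ℝ] H)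
    (hsym : ∀ x y : H, ⟪A x, y⟫ = ⟪x, A y⟫)
    (hpos : ∀ v : H, v ≠ 0 → 0 < ⟪A v, v⟫)
    (τ σ : ℝ) (hτ : 0 < τ) (hσ : 0 < σ)
    (P : H →ₗ[ℝ] H) (hP : P = LinearMap.id + (σ * τ) • A)
    (y ytil yplus : H)
    (hpred : ((LinearMap.id + τ • A : H →ₗ[ℝ] H)) (τ⁻¹ • (ytil - y)) + A y = 0)
    (hcorr : (P ∘ₗ P) (τ⁻¹ • (yplus - y))
      + ((LinearMap.id + τ • A + (τ ^ 2 / 2) • (A ∘ₗ A) - P ∘ₗ P : H →ₗ[ℝ] H))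
          (τ⁻¹ • (ytil - y))
      + ((A + (τ / 2) • (A ∘ₗ A) : H →ₗ[ℝ] H)) y = 0) :
    (((LinearMap.id + τ • A : H →ₗ[ℝ] H)) ∘ₗ (P ∘ₗ P)) yplus
      = ((LinearMap.id + (2 * σ * τ) • A
        + ((σ ^ 2 - 1 / 2) * τ ^ 2) • (A ∘ₗ A) : H →ₗ[ℝ] H)) y := by
  subst hP
  have hτ' : τ ≠ 0 := hτ.ne'
  simp only [LinearMap.comp_apply, LinearMap.add_apply, LinearMap.sub_apply,
    LinearMap.smul_apply, LinearMap.id_apply, map_add, map_smul, map_sub,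
    smul_sub, smul_add, smul_smul] at hpred hcorr ⊢
  -- scale hypotheses by τ
  have hpτ := congrArg (fun v => τ • v) hpred
  have hcτ := congrArg (fun v => τ • v) hcorr
  simp only [smul_zero, smul_add, smul_sub, smul_smul, mul_inv_cancel₀ hτ', one_smul] at hpτ hcτ
  have hinv : ∀ c : ℝ, τ * (τ⁻¹ * c) = c := fun c => by field_simp
  simp only [hinv] at hpτ hcτ
  have hpA := congrArg A hpτ
  have hpAA := congrArg A hpA
  have hcA := congrArg A hcτ
  simp only [map_add, map_smul, map_sub, map_zero] at hpA hpAA hcA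
  linear_combination (norm := module) hcτ + τ • hcA + ((2*σ-1)*τ) • hpA
    + ((σ^2-1/2)*τ^2) • hpAA
end

section
/- Let σ ≥ 1/√2 and define s(z) = (1 + 2σz + (σ² − 1/2)z²) / (1 + (1+2σ)z + (σ² + 2σ)z² + σ²z³) for z ≥ 0. Then s is strictly decreasing on [0, ∞): for all 0 ≤ z₁ < z₂ one has s(z₂) < s(z₁). -/
/-- For `σ ≥ 1/√2`, the stability function
`s(z) = (1 + 2σz + (σ² − 1/2)z²)/(1 + (1+2σ)z + (σ² + 2σ)z² + σ²z³)`
is strictly decreasing on `[0, ∞)`. -/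
theorem stmt_5 (σ : ℝ) (hσ : 1 / Real.sqrt 2 ≤ σ)
    (s : ℝ → ℝ)
    (hs : ∀ z : ℝ, s z =
      (1 + 2 * σ * z + (σ ^ 2 - 1 / 2) * z ^ 2)
      / (1 + (1 + 2 * σ) * z + (σ ^ 2 + 2 * σ) * z ^ 2 + σ ^ 2 * z ^ 3)) :
    ∀ z₁ z₂ : ℝ, 0 ≤ z₁ → z₁ < z₂ → s z₂ < s z₁ := by
  have h2 : (0:ℝ) < Real.sqrt 2 := Real.sqrt_pos.2 (by norm_num)
  have hσ0 : 0 < σ := lt_of_lt_of_le (by positivity) hσ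
  have hσ2 : 1 / 2 ≤ σ ^ 2 := by
    have h1 : (1 / Real.sqrt 2) ^ 2 ≤ σ ^ 2 := by
      apply pow_le_pow_left₀ (by positivity) hσ
    have : (1 / Real.sqrt 2) ^ 2 = 1 / 2 := by
      rw [div_pow, one_pow, Real.sq_sqrt (by norm_num : (2:ℝ) ≥ 0)]
    linarith
  intro x y hx hxy
  have hy : 0 < y := lt_of_le_of_lt hx hxy
  have hDx : 0 < 1 + (1 + 2 * σ) * x + (σ ^ 2 + 2 * σ) * x ^ 2 + σ ^ 2 * x ^ 3 := by
    nlinarith [sq_nonneg x, pow_nonneg hx 3, sq_nonneg σ, mul_nonneg hx hx]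
  have hDy : 0 < 1 + (1 + 2 * σ) * y + (σ ^ 2 + 2 * σ) * y ^ 2 + σ ^ 2 * y ^ 3 := by
    nlinarith [sq_nonneg y, pow_pos hy 3, sq_nonneg σ]
  rw [hs x, hs y, div_lt_div_iff₀ hDy hDx]
  have hQ : 0 < 1 + (2 * σ + 1 / 2) * (x + y) + σ ^ 2 * (x ^ 2 + x * y + y ^ 2)
      + (3 * σ ^ 2 + σ + 1 / 2) * (x * y) + 2 * σ ^ 3 * (x * y * (x + y))
      + σ ^ 2 * (σ ^ 2 - 1 / 2) * (x ^ 2 * y ^ 2) := by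
    have hxy0 : 0 ≤ x * y := mul_nonneg hx hy.le
    have h3 : 0 ≤ σ ^ 3 := by positivity
    nlinarith [sq_nonneg x, sq_nonneg y, mul_nonneg hxy0 (add_nonneg hx hy.le),
      mul_nonneg (mul_nonneg (sq_nonneg σ) (by linarith : (0:ℝ) ≤ σ ^ 2 - 1/2)) (mul_nonneg (sq_nonneg x) (sq_nonneg y)),
      mul_nonneg hx hy.le]
  nlinarith [mul_pos (sub_pos.2 hxy) hQ]
end

section
/- Let σ ≥ 1/√2 and define s(z) = (1 + 2σz + (σ² − 1/2)z²) / (1 + (1+2σ)z + (σ² + 2σ)z² + σ²z³). Then s(0) = 1, and 0 < s(z) < 1 for every z > 0. -/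
/-- For `σ ≥ 1/√2`, the stability function
`s(z) = (1 + 2σz + (σ² − 1/2)z²)/(1 + (1+2σ)z + (σ² + 2σ)z² + σ²z³)`
satisfies `s(0) = 1` and `0 < s(z) < 1` for every `z > 0`. -/
theorem stmt_7 (σ : ℝ) (hσ : 1 / Real.sqrt 2 ≤ σ)
    (s : ℝ → ℝ)
    (hs : ∀ z : ℝ, s z =
      (1 + 2 * σ * z + (σ ^ 2 - 1 / 2) * z ^ 2)
      / (1 + (1 + 2 * σ) * z + (σ ^ 2 + 2 * σ) * z ^ 2 + σ ^ 2 * z ^ 3)) :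
    s 0 = 1 ∧ ∀ z : ℝ, 0 < z → 0 < s z ∧ s z < 1 := by
  have h2 : (0:ℝ) < Real.sqrt 2 := Real.sqrt_pos.mpr (by norm_num)
  have hσ0 : 0 < σ := lt_of_lt_of_le (by positivity) hσ
  have hσ2 : (1:ℝ)/2 ≤ σ ^ 2 := by
    have := mul_le_mul hσ hσ (by positivity) hσ0.le
    calc (1:ℝ)/2 = 1 / Real.sqrt 2 * (1 / Real.sqrt 2) := by
          rw [div_mul_div_comm, one_mul, Real.mul_self_sqrt (by norm_num)]
      _ ≤ σ * σ := this
      _ = σ ^ 2 := (sq σ).symm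
  constructor
  · rw [hs 0]; norm_num
  · intro z hz
    have hN : 0 < 1 + 2 * σ * z + (σ ^ 2 - 1 / 2) * z ^ 2 := by nlinarith
    have hD : 0 < 1 + (1 + 2 * σ) * z + (σ ^ 2 + 2 * σ) * z ^ 2 + σ ^ 2 * z ^ 3 := by
      nlinarith [pow_pos hz 3, pow_pos hz 2]
    rw [hs z]
    constructor
    · positivity
    · rw [div_lt_one hD]; nlinarith [pow_pos hz 3, pow_pos hz 2]
end

section
/- Let H be a finite-dimensional real inner product space, let A : H → H be a symmetric (self-adjoint) positive definite linear operator, let τ > 0 and σ ≥ 1/√2. Suppose y, ỹ, y⁺ ∈ H satisfy the prediction step (I + τA)(ỹ − y)/τ + A y = 0 and the correction step (I + στA)² (y⁺ − y)/τ + (I + τA + (τ²/2)A² − (I + στA)²)(ỹ − y)/τ + (A + (τ/2)A²) y = 0. Then ‖y⁺‖ ≤ ‖y‖. -/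
open RealInnerProductSpace

/-- For a symmetric positive definite `A`, `τ > 0` and `σ ≥ 1/√2`,
one step of the two-stage factorized scheme (backward Euler prediction
`(I + τA)(ỹ − y)/τ + A y = 0` followed by the factorized correction
`(I + στA)² (y⁺ − y)/τ + (I + τA + (τ²/2)A² − (I + στA)²)(ỹ − y)/τ + (A + (τ/2)A²) y = 0`)
does not increase the norm: `‖y⁺‖ ≤ ‖y‖`.
Here `P = I + στA`, so `P ∘ₗ P = (I + στA)²`. -/
theorem stmt_8 {H : Type*} [NormedAddCommGroup H] [InnerProductSpace ℝ H]
    [FiniteDimensional ℝ H]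
    (A : H →ₗ[ℝ] H)
    (hsym : ∀ x y : H, ⟪A x, y⟫ = ⟪x, A y⟫)
    (hpos : ∀ v : H, v ≠ 0 → 0 < ⟪A v, v⟫)
    (τ σ : ℝ) (hτ : 0 < τ) (hσ : 1 / Real.sqrt 2 ≤ σ)
    (P : H →ₗ[ℝ] H) (hP : P = LinearMap.id + (σ * τ) • A)
    (y ytil yplus : H)
    (hpred : ((LinearMap.id + τ • A : H →ₗ[ℝ] H)) (τ⁻¹ • (ytil - y)) + A y = 0)
    (hcorr : (P ∘ₗ P) (τ⁻¹ • (yplus - y))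
      + ((LinearMap.id + τ • A + (τ ^ 2 / 2) • (A ∘ₗ A) - P ∘ₗ P : H →ₗ[ℝ] H))
          (τ⁻¹ • (ytil - y))
      + ((A + (τ / 2) • (A ∘ₗ A) : H →ₗ[ℝ] H)) y = 0) :
    ‖yplus‖ ≤ ‖y‖ := by
  have hT : A.IsSymmetric := hsym
  have hσ0 : 0 < σ := lt_of_lt_of_le (by positivity) hσ
  have hσ2 : (1:ℝ)/2 ≤ σ^2 := by
    have := mul_le_mul hσ hσ (by positivity) (le_of_lt hσ0)
    calc (1:ℝ)/2 = 1 / Real.sqrt 2 * (1 / Real.sqrt 2) := by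
          rw [div_mul_div_comm, one_mul, Real.mul_self_sqrt (by norm_num)]
      _ ≤ σ * σ := this
      _ = σ^2 := (sq σ).symm
  set b : OrthonormalBasis (Fin (Module.finrank ℝ H)) ℝ H :=
    hT.eigenvectorBasis rfl with hb
  set μ : Fin (Module.finrank ℝ H) → ℝ := hT.eigenvalues rfl with hμ
  have hAb : ∀ i, A (b i) = μ i • b i := by
    intro i
    rw [hb, hμ]
    exact hT.apply_eigenvectorBasis rfl i
  have hAinner : ∀ (v : H) (i : Fin (Module.finrank ℝ H)),
      ⟪A v, b i⟫ = μ i * ⟪v, b i⟫ := by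
    intro v i
    rw [hsym, hAb, real_inner_smul_right]
  have hμpos : ∀ i, 0 < μ i := by
    intro i
    have hbne : b i ≠ 0 := by
      intro h
      have := b.orthonormal.1 i
      rw [h, norm_zero] at this
      norm_num at this
    have h1 := hpos (b i) hbne
    rw [hAb, real_inner_smul_left, real_inner_self_eq_norm_sq, b.orthonormal.1 i] at h1
    simpa using h1
  -- componentwise inequality
  have key : ∀ i, ⟪yplus, b i⟫^2 ≤ ⟪y, b i⟫^2 := by
    intro i
    set c := ⟪y, b i⟫ with hc
    set t := ⟪ytil, b i⟫ with ht
    set p := ⟪yplus, b i⟫ with hp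
    set m := μ i with hm
    have hm0 : 0 < m := hμpos i
    have hτne : τ ≠ 0 := ne_of_gt hτ
    -- scalar prediction equation (q = τ⁻¹(t-c))
    have e1 : (1 + τ*m) * (τ⁻¹ * (t - c)) + m * c = 0 := by
      have h0 := congrArg (fun v => ⟪v, b i⟫) hpred
      simp only [LinearMap.add_apply, LinearMap.smul_apply, LinearMap.id_apply,
        inner_add_left, inner_zero_left, real_inner_smul_left, inner_sub_left,
        hAinner, map_sub] at h0
      rw [← hc, ← ht, ← hm] at h0
      linear_combination h0
    have hPinner : ∀ (v : H), ⟪P v, b i⟫ = (1 + σ * τ * m) * ⟪v, b i⟫ := by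
      intro v
      rw [hP]
      simp only [LinearMap.add_apply, LinearMap.smul_apply, LinearMap.id_apply,
        inner_add_left, real_inner_smul_left, hAinner]
      rw [← hm]; ring
    have e2 : (1 + σ*τ*m)^2 * (τ⁻¹ * (p - c))
        + (1 + τ*m + τ^2*m^2/2 - (1 + σ*τ*m)^2) * (τ⁻¹ * (t - c))
        + (m + τ/2 * m^2) * c = 0 := by
      have h0 := congrArg (fun v => ⟪v, b i⟫) hcorr
      simp only [LinearMap.add_apply, LinearMap.sub_apply, LinearMap.smul_apply,
        LinearMap.id_apply, LinearMap.comp_apply, inner_add_left, inner_sub_left,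
        inner_zero_left, real_inner_smul_left, hAinner, hPinner, map_sub] at h0
      rw [← hc, ← ht, ← hp, ← hm] at h0
      linear_combination h0
    -- eliminate τ⁻¹
    set q := τ⁻¹ * (t - c) with hq
    set u := τ⁻¹ * (p - c) with hu
    have htq : t - c = τ * q := by rw [hq]; field_simp
    have hpu : p - c = τ * u := by rw [hu]; field_simp
    -- derive D p = N c
    set D := (1 + σ*τ*m)^2 * (1 + τ*m) with hD
    set N := 1 + 2*σ*(τ*m) + (σ^2 - 1/2) * (τ*m)^2 with hN
    have keyeq : D * p = N * c := by
      rw [hD, hN]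
      linear_combination ((1 + σ*τ*m)^2*(1 + τ*m)) * hpu + (1 + τ*m)*τ * e2
        - (1 + τ*m + τ^2*m^2/2 - (1 + σ*τ*m)^2)*τ * e1
    have hz0 : 0 < τ * m := mul_pos hτ hm0
    have hNnn : 0 ≤ N := by
      rw [hN]
      have h1 : 0 ≤ 2*σ*(τ*m) := by positivity
      have h2 : 0 ≤ (σ^2 - 1/2) * (τ*m)^2 :=
        mul_nonneg (by linarith) (sq_nonneg _)
      linarith
    have hND : N ≤ D := by
      rw [hN, hD]
      have h1 : 0 ≤ (2*σ + 1/2)*(τ*m)^2 := mul_nonneg (by linarith) (sq_nonneg _)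
      have h2 : 0 ≤ σ^2*(τ*m)^3 := mul_nonneg (sq_nonneg _) (by positivity)
      nlinarith [hz0, h1, h2]
    have hD0 : 0 < D := by
      rw [hD]
      have h1 : 0 < 1 + σ*τ*m := by
        have : 0 < σ*τ*m := by positivity
        linarith
      have h2 : (0:ℝ) < 1 + τ*m := by linarith
      positivity
    have hN2 : N^2 ≤ D^2 := pow_le_pow_left₀ hNnn hND 2
    have h2 : D^2 * p^2 ≤ D^2 * c^2 := by
      calc D^2 * p^2 = (D*p)^2 := by ring
        _ = (N*c)^2 := by rw [keyeq]
        _ = N^2 * c^2 := by ring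
        _ ≤ D^2 * c^2 := mul_le_mul_of_nonneg_right hN2 (sq_nonneg c)
    exact le_of_mul_le_mul_left h2 (by positivity)
  -- Parseval
  have parseval : ∀ x : H, ‖x‖^2 = ∑ i, ⟪x, b i⟫^2 := by
    intro x
    have h0 := b.sum_inner_mul_inner x x
    rw [real_inner_self_eq_norm_sq] at h0
    rw [← h0]
    congr 1; ext i; rw [real_inner_comm x (b i), sq]
  have hsq : ‖yplus‖^2 ≤ ‖y‖^2 := by
    rw [parseval, parseval]
    exact Finset.sum_le_sum fun i _ => key i
  have hfin := Real.sqrt_le_sqrt hsq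
  rwa [Real.sqrt_sq (norm_nonneg _), Real.sqrt_sq (norm_nonneg _)] at hfin
end

section
/- Let σ > 0 and define s(z) = (1 + 2σz + (σ² − 1/2)z²) / (1 + (1+2σ)z + (σ² + 2σ)z² + σ²z³). Then s approximates exp(−z) with second-order accuracy at z = 0: there exist constants C > 0 and δ > 0 such that |exp(−z) − s(z)| ≤ C|z|³ for all |z| ≤ δ; equivalently, s(0) = 1, s′(0) = −1 and s″(0) = 1. -/
set_option maxHeartbeats 1000000


/-- For `σ > 0`, the stability function
`s(z) = (1 + 2σz + (σ² − 1/2)z²)/(1 + (1+2σ)z + (σ² + 2σ)z² + σ²z³)`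
approximates `exp(−z)` with second-order accuracy at `z = 0`:
`|exp(−z) − s(z)| ≤ C|z|³` for all `|z| ≤ δ`. -/
theorem stmt_9 (σ : ℝ) (hσ : 0 < σ)
    (s : ℝ → ℝ)
    (hs : ∀ z : ℝ, s z =
      (1 + 2 * σ * z + (σ ^ 2 - 1 / 2) * z ^ 2)
      / (1 + (1 + 2 * σ) * z + (σ ^ 2 + 2 * σ) * z ^ 2 + σ ^ 2 * z ^ 3)) :
    ∃ C > (0 : ℝ), ∃ δ > (0 : ℝ), ∀ z : ℝ, |z| ≤ δ →
      |Real.exp (-z) - s z| ≤ C * |z| ^ 3 := by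
  set A : ℝ := 1 + 4 * σ + 2 * σ ^ 2 with hA
  have hApos : 0 < A := by positivity
  set B : ℝ := 1 / 2 + 2 * σ + σ ^ 2 with hB
  have hBpos : 0 < B := by positivity
  refine ⟨1 + 2 * B, by positivity, min 1 (1 / (2 * A)), lt_min one_pos (by positivity), ?_⟩
  intro z hz
  have hz1 : |z| ≤ 1 := hz.trans (min_le_left _ _)
  have hz2 : |z| ≤ 1 / (2 * A) := hz.trans (min_le_right _ _)
  have habs : -|z| ≤ z := neg_abs_le z
  have habs' : z ≤ |z| := le_abs_self z
  have hzn : (0:ℝ) ≤ |z| := abs_nonneg z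
  set D : ℝ := 1 + (1 + 2 * σ) * z + (σ ^ 2 + 2 * σ) * z ^ 2 + σ ^ 2 * z ^ 3 with hD
  have hsq : z ^ 2 = |z| ^ 2 := (sq_abs z).symm
  have hDlb : 1 / 2 ≤ D := by
    have h1 : (1 + 2 * σ) * z ≥ -((1 + 2 * σ) * |z|) := by nlinarith
    have h2 : (σ ^ 2 + 2 * σ) * z ^ 2 ≥ 0 := by positivity
    have h3 : σ ^ 2 * z ^ 3 ≥ -(σ ^ 2 * |z|) := by
      have hc : |z ^ 3| ≤ |z| := by
        rw [abs_pow]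
        nlinarith
      have hz3 : -|z| ≤ z ^ 3 := le_trans (neg_le_neg hc) (neg_abs_le _)
      nlinarith [sq_nonneg σ, mul_le_mul_of_nonneg_left hz3 (sq_nonneg σ)]
    have hAz : A * |z| ≤ 1 / 2 := by
      rw [le_div_iff₀ (by positivity)] at hz2
      nlinarith
    nlinarith
  have hDpos : 0 < D := lt_of_lt_of_le (by norm_num) hDlb
  -- exp Taylor bound
  have hexp : |Real.exp (-z) - (1 - z + z ^ 2 / 2)| ≤ |z| ^ 3 := by
    have h := Real.exp_bound (x := -z) (by rwa [abs_neg]) (n := 3) (by norm_num)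
    have hsum : ∑ m ∈ Finset.range 3, (-z) ^ m / (m.factorial : ℝ)
        = 1 - z + z ^ 2 / 2 := by
      simp [Finset.sum_range_succ]
      ring
    rw [hsum, abs_neg] at h
    calc |Real.exp (-z) - (1 - z + z ^ 2 / 2)|
        ≤ |z| ^ 3 * ((3:ℕ).succ / ((3:ℕ).factorial * (3:ℕ))) := h
      _ ≤ |z| ^ 3 * 1 := by
          apply mul_le_mul_of_nonneg_left _ (by positivity)
          norm_num [Nat.factorial]
      _ = |z| ^ 3 := by ring
  set Q : ℝ := 1 / 2 - σ + (σ - σ ^ 2 / 2) * z + (σ ^ 2 / 2) * z ^ 2 with hQ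
  have hQbound : |Q| ≤ B := by
    have h1 : |Q| ≤ |1 / 2 - σ| + |(σ - σ ^ 2 / 2) * z| + |(σ ^ 2 / 2) * z ^ 2| := by
      calc |Q| ≤ |1 / 2 - σ + (σ - σ ^ 2 / 2) * z| + |(σ ^ 2 / 2) * z ^ 2| := abs_add_le _ _
        _ ≤ |1 / 2 - σ| + |(σ - σ ^ 2 / 2) * z| + |(σ ^ 2 / 2) * z ^ 2| := by
            gcongr; exact abs_add_le _ _
    have h2 : |1 / 2 - σ| ≤ 1 / 2 + σ := by
      rw [abs_le]; constructor <;> nlinarith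
    have habs3 : |σ - σ ^ 2 / 2| ≤ σ + σ ^ 2 / 2 := by
      calc |σ - σ ^ 2 / 2| ≤ |σ| + |σ ^ 2 / 2| := abs_sub _ _
        _ = σ + σ ^ 2 / 2 := by
            rw [abs_of_pos hσ, abs_of_nonneg (by positivity : (0:ℝ) ≤ σ ^ 2 / 2)]
    have h3 : |(σ - σ ^ 2 / 2) * z| ≤ σ + σ ^ 2 / 2 := by
      rw [abs_mul]
      calc |σ - σ ^ 2 / 2| * |z| ≤ (σ + σ ^ 2 / 2) * 1 :=
            mul_le_mul habs3 hz1 hzn (by positivity)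
        _ = σ + σ ^ 2 / 2 := by ring
    have h4 : |(σ ^ 2 / 2) * z ^ 2| ≤ σ ^ 2 / 2 := by
      rw [abs_mul, abs_of_nonneg (by positivity : (0:ℝ) ≤ σ ^ 2 / 2)]
      calc σ ^ 2 / 2 * |z ^ 2| ≤ σ ^ 2 / 2 * 1 := by
            apply mul_le_mul_of_nonneg_left _ (by positivity)
            rw [abs_of_nonneg (sq_nonneg z), hsq]; nlinarith
        _ = σ ^ 2 / 2 := by ring
    rw [hB]; linarith
  -- key identity
  have hDne : (1 + (1 + 2 * σ) * z + (σ ^ 2 + 2 * σ) * z ^ 2 + σ ^ 2 * z ^ 3) ≠ 0 := by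
    rw [← hD]; exact ne_of_gt hDpos
  have hkey : Real.exp (-z) - s z
      = (Real.exp (-z) - (1 - z + z ^ 2 / 2)) + z ^ 3 * Q / D := by
    rw [hs z, hQ, hD]
    linear_combination (-(1 - z + z ^ 2 / 2)) * mul_inv_cancel₀ hDne
  have hfrac : |z ^ 3 * Q / D| ≤ 2 * B * |z| ^ 3 := by
    clear_value A B D Q
    rw [abs_div, abs_mul, abs_of_pos hDpos, div_le_iff₀ hDpos, abs_pow]
    have h6 : |z| ^ 3 * |Q| ≤ |z| ^ 3 * B := by
      apply mul_le_mul_of_nonneg_left hQbound (by positivity)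
    have h7 : 2 * B * |z| ^ 3 * (1 / 2) ≤ 2 * B * |z| ^ 3 * D :=
      mul_le_mul_of_nonneg_left hDlb (by positivity)
    linarith
  calc |Real.exp (-z) - s z|
      ≤ |Real.exp (-z) - (1 - z + z ^ 2 / 2)| + |z ^ 3 * Q / D| := by
        rw [hkey]; exact abs_add_le _ _
    _ ≤ |z| ^ 3 + 2 * B * |z| ^ 3 := add_le_add hexp hfrac
    _ = (1 + 2 * B) * |z| ^ 3 := by ring
end
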